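/- In Example 1's graph, the coded store cs = x_{v_1},...,x_{v_{2N}}, x_a, x_{v_{2N+1}},...,x_{v_{4N}}, x_a ⊕ x_b, x_{v_{4N+1}},...,x_{v_{6N}}, x_b, x_{v_{6N+1}},...,x_{v_{8N}} of length 8N+3 recovers every edge of G from some contiguous interval of length at most 2N+2. Hence S^c_2(G, n+1) ≤ (2N+2)/2 = N+1. -/
import Mathlib


/-- Example 1's graph (as in the paper): vertices `v_1, …, v_{8N}` (indices
`0, …, 8N−1`), `a` (index `8N`) and `b` (index `8N+1`). -/
def exampleGraph (N : ℕ) : SimpleGraph (Fin (8 * N + 2)) :=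
  SimpleGraph.fromRel (fun u w =>
    (u.val + 1 = w.val ∧ w.val < 8 * N) ∨
    (u.val = 8 * N ∧ w.val < 6 * N) ∨
    (u.val = 8 * N + 1 ∧ 2 * N ≤ w.val ∧ w.val < 8 * N) ∨
    (u.val = 8 * N ∧ w.val = 8 * N + 1))

/-- The coded store
`x_{v_1},…,x_{v_{2N}}, x_a, x_{v_{2N+1}},…,x_{v_{4N}}, x_a ⊕ x_b,
 x_{v_{4N+1}},…,x_{v_{6N}}, x_b, x_{v_{6N+1}},…,x_{v_{8N}}`
of length `8N + 3` (chunks are standard basis vectors of `GF(2)^{8N+2}`). -/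
noncomputable def exStore (N : ℕ) (k : Fin (8 * N + 3)) : Fin (8 * N + 2) → ZMod 2 :=
  if h1 : k.val < 2 * N then Pi.single (⟨k.val, by omega⟩ : Fin (8 * N + 2)) 1
  else if h2 : k.val = 2 * N then Pi.single (⟨8 * N, by omega⟩ : Fin (8 * N + 2)) 1
  else if h3 : k.val ≤ 4 * N then Pi.single (⟨k.val - 1, by have := k.isLt; omega⟩ : Fin (8 * N + 2)) 1
  else if h4 : k.val = 4 * N + 1 then
    Pi.single (⟨8 * N, by omega⟩ : Fin (8 * N + 2)) 1 +
      Pi.single (⟨8 * N + 1, by omega⟩ : Fin (8 * N + 2)) 1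
  else if h5 : k.val ≤ 6 * N + 1 then Pi.single (⟨k.val - 2, by have := k.isLt; omega⟩ : Fin (8 * N + 2)) 1
  else if h6 : k.val = 6 * N + 2 then Pi.single (⟨8 * N + 1, by omega⟩ : Fin (8 * N + 2)) 1
  else Pi.single (⟨k.val - 3, by have := k.isLt; omega⟩ : Fin (8 * N + 2)) 1

/-- The edge `{u, w}` is recovered from the interval `[i, j]` of the coded
store `c`: both basis chunks lie in the span of the stored chunks there. -/
def edgeRecovered {n m : ℕ} (c : Fin m → (Fin n → ZMod 2)) (u w : Fin n)
    (i j : ℕ) : Prop :=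
  (Pi.single u 1 : Fin n → ZMod 2) ∈
    Submodule.span (ZMod 2) {y : Fin n → ZMod 2 | ∃ k : Fin m, i ≤ k.val ∧ k.val ≤ j ∧ y = c k} ∧
  (Pi.single w 1 : Fin n → ZMod 2) ∈
    Submodule.span (ZMod 2) {y : Fin n → ZMod 2 | ∃ k : Fin m, i ≤ k.val ∧ k.val ≤ j ∧ y = c k}

/-- The coded stretch metric for `t = 2` over linearly coded stores of length
`m` recovering every edge from some interval. -/
noncomputable def Sc2 {n : ℕ} (G : SimpleGraph (Fin n)) (m : ℕ) : ℝ :=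
  sInf {r : ℝ | ∃ c : Fin m → (Fin n → ZMod 2),
    (∀ u w : Fin n, G.Adj u w → ∃ i j : ℕ, i ≤ j ∧ j < m ∧ edgeRecovered c u w i j) ∧
    r = sSup {x : ℝ | ∃ u w : Fin n, G.Adj u w ∧
      x = ((sInf {ℓ : ℕ | ∃ i j : ℕ, i ≤ j ∧ j < m ∧ edgeRecovered c u w i j ∧
        ℓ = j - i + 1} : ℕ) : ℝ) / 2}}

namespace Ex1Aux

/-- position of chunk `x_{v_t}` in the store -/
def pos (N t : ℕ) : ℕ :=
  if t < 2 * N then t else if t < 4 * N then t + 1 else if t < 6 * N then t + 2 else t + 3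

lemma pos_lt (N t : ℕ) (ht : t < 8 * N) : pos N t < 8 * N + 3 := by
  unfold pos; split_ifs <;> omega

lemma pos_mono (N : ℕ) {a b : ℕ} (h : a ≤ b) : pos N a ≤ pos N b := by
  unfold pos; split_ifs <;> omega

lemma pos_succ (N t : ℕ) : pos N (t + 1) ≤ pos N t + 2 := by
  unfold pos; split_ifs <;> omega

lemma store_mem {n m : ℕ} (c : Fin m → (Fin n → ZMod 2)) {i j : ℕ} (k : Fin m)
    (h1 : i ≤ k.val) (h2 : k.val ≤ j) :
    c k ∈ Submodule.span (ZMod 2)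
      {y : Fin n → ZMod 2 | ∃ k : Fin m, i ≤ k.val ∧ k.val ≤ j ∧ y = c k} :=
  Submodule.subset_span ⟨k, h1, h2, rfl⟩

lemma add_self {n : ℕ} (v : Fin n → ZMod 2) : v + v = 0 :=
  funext fun x => CharTwo.add_self_eq_zero (v x)

lemma exStore_eq_v (N : ℕ) (p : ℕ) (hp : p < 8 * N + 3) (t : ℕ) (ht : t < 8 * N + 2)
    (h : (p < 2 * N ∧ t = p) ∨ (2 * N < p ∧ p ≤ 4 * N ∧ t = p - 1) ∨
      (4 * N + 1 < p ∧ p ≤ 6 * N + 1 ∧ t = p - 2) ∨ (6 * N + 2 < p ∧ t = p - 3)) :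
    exStore N ⟨p, hp⟩ = Pi.single (⟨t, ht⟩ : Fin (8 * N + 2)) 1 := by
  unfold exStore
  simp only [Fin.val_mk] at *
  obtain ⟨h1, rfl⟩ | ⟨h1, h2, rfl⟩ | ⟨h1, h2, rfl⟩ | ⟨h1, rfl⟩ := h <;>
    split_ifs <;> first | rfl | (exfalso; omega)

lemma exStore_a (N : ℕ) (hp : 2 * N < 8 * N + 3) :
    exStore N ⟨2 * N, hp⟩ = Pi.single (⟨8 * N, by omega⟩ : Fin (8 * N + 2)) 1 := by
  unfold exStore
  simp only [Fin.val_mk] at *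
  split_ifs <;> first | rfl | omega

lemma exStore_ab (N : ℕ) (hp : 4 * N + 1 < 8 * N + 3) :
    exStore N ⟨4 * N + 1, hp⟩ =
      Pi.single (⟨8 * N, by omega⟩ : Fin (8 * N + 2)) 1 +
        Pi.single (⟨8 * N + 1, by omega⟩ : Fin (8 * N + 2)) 1 := by
  unfold exStore
  simp only [Fin.val_mk] at *
  split_ifs <;> first | rfl | omega

lemma exStore_b (N : ℕ) (hp : 6 * N + 2 < 8 * N + 3) :
    exStore N ⟨6 * N + 2, hp⟩ = Pi.single (⟨8 * N + 1, by omega⟩ : Fin (8 * N + 2)) 1 := by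
  unfold exStore
  simp only [Fin.val_mk] at *
  split_ifs <;> first | rfl | omega

/-- the span of the interval `[i,j]` of the store -/
noncomputable def sp (N i j : ℕ) : Submodule (ZMod 2) (Fin (8 * N + 2) → ZMod 2) :=
  Submodule.span (ZMod 2)
    {y : Fin (8 * N + 2) → ZMod 2 | ∃ k : Fin (8 * N + 3), i ≤ k.val ∧ k.val ≤ j ∧ y = exStore N k}

lemma memV (N t i j : ℕ) (ht : t < 8 * N) (hi : i ≤ pos N t) (hj : pos N t ≤ j) :
    (Pi.single (⟨t, by omega⟩ : Fin (8 * N + 2)) 1) ∈ sp N i j := by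
  have hm := store_mem (exStore N) (⟨pos N t, pos_lt N t ht⟩ : Fin (8 * N + 3)) hi hj
  rwa [exStore_eq_v N (pos N t) (pos_lt N t ht) t (by omega)
    (by unfold pos; split_ifs <;> omega)] at hm

lemma memA (N i j : ℕ) (hi : i ≤ 2 * N) (hj : 2 * N ≤ j) :
    (Pi.single (⟨8 * N, by omega⟩ : Fin (8 * N + 2)) 1) ∈ sp N i j := by
  have hm := store_mem (exStore N) (⟨2 * N, by omega⟩ : Fin (8 * N + 3)) hi hj
  rwa [exStore_a N (by omega)] at hm

lemma memB (N i j : ℕ) (hi : i ≤ 6 * N + 2) (hj : 6 * N + 2 ≤ j) :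
    (Pi.single (⟨8 * N + 1, by omega⟩ : Fin (8 * N + 2)) 1) ∈ sp N i j := by
  have hm := store_mem (exStore N) (⟨6 * N + 2, by omega⟩ : Fin (8 * N + 3)) hi hj
  rwa [exStore_b N (by omega)] at hm

lemma memAB (N i j : ℕ) (hi : i ≤ 4 * N + 1) (hj : 4 * N + 1 ≤ j) :
    (Pi.single (⟨8 * N, by omega⟩ : Fin (8 * N + 2)) 1 +
      Pi.single (⟨8 * N + 1, by omega⟩ : Fin (8 * N + 2)) 1) ∈ sp N i j := by
  have hm := store_mem (exStore N) (⟨4 * N + 1, by omega⟩ : Fin (8 * N + 3)) hi hj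
  rwa [exStore_ab N (by omega)] at hm

/-- `x_a` recovered from `x_a + x_b` together with `x_b`. -/
lemma memA2 (N i j : ℕ) (hi : i ≤ 4 * N + 1) (hj : 6 * N + 2 ≤ j) :
    (Pi.single (⟨8 * N, by omega⟩ : Fin (8 * N + 2)) 1) ∈ sp N i j := by
  have h1 := memAB N i j hi (by omega)
  have h2 := memB N i j (by omega) hj
  have h3 := Submodule.add_mem _ h1 h2
  rwa [add_assoc, add_self, add_zero] at h3

/-- `x_b` recovered from `x_a` together with `x_a + x_b`. -/
lemma memB2 (N i j : ℕ) (hi : i ≤ 2 * N) (hj : 4 * N + 1 ≤ j) :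
    (Pi.single (⟨8 * N + 1, by omega⟩ : Fin (8 * N + 2)) 1) ∈ sp N i j := by
  have h1 := memA N i j hi (by omega)
  have h2 := memAB N i j (by omega) hj
  have h3 := Submodule.add_mem _ h1 h2
  rwa [← add_assoc, add_self, zero_add] at h3

lemma rec_symm {n m : ℕ} {c : Fin m → (Fin n → ZMod 2)} {u w : Fin n} {i j : ℕ}
    (h : edgeRecovered c u w i j) : edgeRecovered c w u i j := ⟨h.2, h.1⟩

/-- Main one-sided recovery lemma. -/
lemma main1 {N : ℕ} (hN : 1 ≤ N) (u w : Fin (8 * N + 2))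
    (hrel : (u.val + 1 = w.val ∧ w.val < 8 * N) ∨
      (u.val = 8 * N ∧ w.val < 6 * N) ∨
      (u.val = 8 * N + 1 ∧ 2 * N ≤ w.val ∧ w.val < 8 * N) ∨
      (u.val = 8 * N ∧ w.val = 8 * N + 1)) :
    ∃ i j : ℕ, i ≤ j ∧ j < 8 * N + 3 ∧ j - i + 1 ≤ 2 * N + 2 ∧
      edgeRecovered (exStore N) u w i j := by
  have hu : u = ⟨u.val, u.isLt⟩ := rfl
  have hw : w = ⟨w.val, w.isLt⟩ := rfl
  rcases hrel with ⟨h1, h2⟩ | ⟨h1, h2⟩ | ⟨h1, h2, h3⟩ | ⟨h1, h2⟩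
  · -- path edge v_{u.val} — v_{w.val}
    refine ⟨pos N u.val, pos N w.val, pos_mono N (by omega), pos_lt N w.val h2, ?_, ?_, ?_⟩
    · have := pos_succ N u.val
      have := pos_mono N (show u.val ≤ u.val + 1 by omega)
      rw [← h1] at *
      omega
    · rw [hu]; exact memV N u.val _ _ (by omega) le_rfl (pos_mono N (by omega))
    · rw [hw]; exact memV N w.val _ _ (by omega) (pos_mono N (by omega)) le_rfl
  · -- a — v_{w.val},  w.val < 6N
    rcases lt_or_ge w.val (2 * N) with hc | hc
    · refine ⟨pos N w.val, 2 * N, ?_, by omega, ?_, ?_, ?_⟩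
      · have : pos N w.val = w.val := by unfold pos; split_ifs <;> omega
        omega
      · have : pos N w.val = w.val := by unfold pos; split_ifs <;> omega
        omega
      · rw [hu]; have huv : u.val = 8 * N := h1
        simp only [huv]
        exact memA N _ _ (by
          have : pos N w.val = w.val := by unfold pos; split_ifs <;> omega
          omega) le_rfl
      · rw [hw]; exact memV N w.val _ _ (by omega) le_rfl (by
          have : pos N w.val = w.val := by unfold pos; split_ifs <;> omega
          omega)
    · rcases lt_or_ge w.val (4 * N) with hc2 | hc2
      · have hp : pos N w.val = w.val + 1 := by unfold pos; split_ifs <;> omega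
        refine ⟨2 * N, pos N w.val, by omega, by omega, by omega, ?_, ?_⟩
        · rw [hu]; have huv : u.val = 8 * N := h1
          simp only [huv]
          exact memA N _ _ le_rfl (by omega)
        · rw [hw]; exact memV N w.val _ _ (by omega) (by omega) le_rfl
      · have hp : pos N w.val = w.val + 2 := by unfold pos; split_ifs <;> omega
        refine ⟨4 * N + 1, 6 * N + 2, by omega, by omega, by omega, ?_, ?_⟩
        · rw [hu]; have huv : u.val = 8 * N := h1
          simp only [huv]
          exact memA2 N _ _ le_rfl le_rfl
        · rw [hw]; exact memV N w.val _ _ (by omega) (by omega) (by omega)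
  · -- b — v_{w.val},  2N ≤ w.val < 8N
    rcases lt_or_ge w.val (4 * N) with hc | hc
    · have hp : pos N w.val = w.val + 1 := by unfold pos; split_ifs <;> omega
      refine ⟨2 * N, 4 * N + 1, by omega, by omega, by omega, ?_, ?_⟩
      · rw [hu]; have huv : u.val = 8 * N + 1 := h1
        simp only [huv]
        exact memB2 N _ _ le_rfl le_rfl
      · rw [hw]; exact memV N w.val _ _ (by omega) (by omega) (by omega)
    · rcases lt_or_ge w.val (6 * N) with hc2 | hc2
      · have hp : pos N w.val = w.val + 2 := by unfold pos; split_ifs <;> omega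
        refine ⟨pos N w.val, 6 * N + 2, by omega, by omega, by omega, ?_, ?_⟩
        · rw [hu]; have huv : u.val = 8 * N + 1 := h1
          simp only [huv]
          exact memB N _ _ (by omega) le_rfl
        · rw [hw]; exact memV N w.val _ _ (by omega) le_rfl (by omega)
      · have hp : pos N w.val = w.val + 3 := by unfold pos; split_ifs <;> omega
        refine ⟨6 * N + 2, pos N w.val, by omega, by omega, by omega, ?_, ?_⟩
        · rw [hu]; have huv : u.val = 8 * N + 1 := h1
          simp only [huv]
          exact memB N _ _ le_rfl (by omega)
        · rw [hw]; exact memV N w.val _ _ (by omega) (by omega) le_rfl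
  · -- a — b
    refine ⟨2 * N, 4 * N + 1, by omega, by omega, by omega, ?_, ?_⟩
    · rw [hu]; have huv : u.val = 8 * N := h1
      simp only [huv]
      exact memA N _ _ le_rfl (by omega)
    · rw [hw]; have hwv : w.val = 8 * N + 1 := h2
      simp only [hwv]
      exact memB2 N _ _ le_rfl le_rfl

end Ex1Aux

/-- In Example 1's graph, the explicit coded store `exStore N` of length
`8N + 3` recovers every edge from a contiguous interval of length at most
`2N + 2`; hence `S^c_2(G, n+1) ≤ (2N+2)/2 = N + 1`. -/
theorem example1_coded_upper_bound {N : ℕ} (hN : 1 ≤ N) :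
    (∀ u w : Fin (8 * N + 2), (exampleGraph N).Adj u w →
      ∃ i j : ℕ, i ≤ j ∧ j < 8 * N + 3 ∧ j - i + 1 ≤ 2 * N + 2 ∧
        edgeRecovered (exStore N) u w i j) ∧
    Sc2 (exampleGraph N) (8 * N + 3) ≤ (N : ℝ) + 1 := by
  have part1 : ∀ u w : Fin (8 * N + 2), (exampleGraph N).Adj u w →
      ∃ i j : ℕ, i ≤ j ∧ j < 8 * N + 3 ∧ j - i + 1 ≤ 2 * N + 2 ∧
        edgeRecovered (exStore N) u w i j := by
    intro u w h
    rw [exampleGraph, SimpleGraph.fromRel_adj] at h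
    obtain ⟨-, hrel | hrel⟩ := h
    · exact Ex1Aux.main1 hN u w hrel
    · obtain ⟨i, j, a, b, c, d⟩ := Ex1Aux.main1 hN w u hrel
      exact ⟨i, j, a, b, c, Ex1Aux.rec_symm d⟩
  refine ⟨part1, ?_⟩
  unfold Sc2
  have hP : ∀ u w : Fin (8 * N + 2), (exampleGraph N).Adj u w →
      ∃ i j : ℕ, i ≤ j ∧ j < 8 * N + 3 ∧ edgeRecovered (exStore N) u w i j := by
    intro u w h
    obtain ⟨i, j, a, b, -, d⟩ := part1 u w h
    exact ⟨i, j, a, b, d⟩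
  have hbdd : BddBelow {r : ℝ | ∃ c : Fin (8 * N + 3) → (Fin (8 * N + 2) → ZMod 2),
      (∀ u w : Fin (8 * N + 2), (exampleGraph N).Adj u w →
        ∃ i j : ℕ, i ≤ j ∧ j < 8 * N + 3 ∧ edgeRecovered c u w i j) ∧
      r = sSup {x : ℝ | ∃ u w : Fin (8 * N + 2), (exampleGraph N).Adj u w ∧
        x = ((sInf {ℓ : ℕ | ∃ i j : ℕ, i ≤ j ∧ j < 8 * N + 3 ∧
          edgeRecovered c u w i j ∧ ℓ = j - i + 1} : ℕ) : ℝ) / 2}} := by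
    refine ⟨0, ?_⟩
    rintro r ⟨c, -, rfl⟩
    apply Real.sSup_nonneg
    rintro x ⟨u, w, -, rfl⟩
    positivity
  have hle := csInf_le hbdd ⟨exStore N, hP, rfl⟩
  refine hle.trans ?_
  apply Real.sSup_le
  · rintro x ⟨u, w, hadj, rfl⟩
    obtain ⟨i, j, hij, hjm, hlen, hrec⟩ := part1 u w hadj
    have hm : (j - i + 1) ∈ {ℓ : ℕ | ∃ i j : ℕ, i ≤ j ∧ j < 8 * N + 3 ∧
        edgeRecovered (exStore N) u w i j ∧ ℓ = j - i + 1} :=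
      ⟨i, j, hij, hjm, hrec, rfl⟩
    have h1 := (Nat.sInf_le hm).trans hlen
    have h2 : ((sInf {ℓ : ℕ | ∃ i j : ℕ, i ≤ j ∧ j < 8 * N + 3 ∧
        edgeRecovered (exStore N) u w i j ∧ ℓ = j - i + 1} : ℕ) : ℝ) ≤ 2 * N + 2 := by
      exact_mod_cast h1
    linarith
  · positivity
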